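/- Global asymptotic stability of the fixed-frequency peak current control loop (Theorem 2): Let m₁ > m₂ ≥ 0 and Λ ≥ 0 satisfy Λ < (m₁ − m₂)/2. For each n ∈ ℕ let ψₙ : ℝ → ℝ be Lipschitz with constant Λ and satisfy ψₙ(0) = 0. Suppose real sequences (xₙ)ₙ≥0 and (uₙ)ₙ≥0 satisfy, for all n ≥ 1, xₙ = xₙ₋₁ − m₂ uₙ₋₁ + m₁ uₙ and 0 = xₙ + ψₙ(uₙ), with also 0 = x₀ + ψ₀(u₀). Then |uₙ| ≤ ((m₂ + Λ)/(m₁ − Λ))ⁿ |u₀| for all n ≥ 0, where (m₂ + Λ)/(m₁ − Λ) < 1; in particular uₙ → 0 and xₙ → 0 as n → ∞. -/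

import Mathlib

/-- Global asymptotic stability of the fixed-frequency peak current control loop
(Theorem 2). -/
theorem fixed_frequency_peak_global_asymptotic_stability
    (m₁ m₂ Λ : ℝ) (hm : m₂ < m₁) (hm₂ : 0 ≤ m₂) (hΛ : 0 ≤ Λ)
    (hΛm : Λ < (m₁ - m₂) / 2)
    (ψ : ℕ → ℝ → ℝ)
    (hlip : ∀ n a b, |ψ n a - ψ n b| ≤ Λ * |a - b|)
    (hψ0 : ∀ n, ψ n 0 = 0)
    (x u : ℕ → ℝ)
    (hrec : ∀ n : ℕ, 1 ≤ n → x n = x (n - 1) - m₂ * u (n - 1) + m₁ * u n)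
    (htrig : ∀ n : ℕ, 1 ≤ n → 0 = x n + ψ n (u n))
    (htrig0 : 0 = x 0 + ψ 0 (u 0)) :
    (∀ n : ℕ, |u n| ≤ ((m₂ + Λ) / (m₁ - Λ)) ^ n * |u 0|) ∧
      (m₂ + Λ) / (m₁ - Λ) < 1 ∧
      Filter.Tendsto u Filter.atTop (nhds 0) ∧
      Filter.Tendsto x Filter.atTop (nhds 0) := by
  set r : ℝ := (m₂ + Λ) / (m₁ - Λ) with hr
  have hψb : ∀ n a, |ψ n a| ≤ Λ * |a| := by
    intro n a
    have := hlip n a 0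
    simpa [hψ0 n] using this
  have hxψ : ∀ n, x n = -ψ n (u n) := by
    intro n
    cases n with
    | zero => linarith [htrig0]
    | succ k => linarith [htrig (k + 1) (Nat.le_add_left 1 k)]
  have hm₁Λ : 0 < m₁ - Λ := by linarith
  have hnum : 0 ≤ m₂ + Λ := by linarith
  have hr0 : 0 ≤ r := div_nonneg hnum hm₁Λ.le
  have hr1 : r < 1 := by
    rw [hr, div_lt_one hm₁Λ]; linarith
  -- key step inequality
  have hstep : ∀ n : ℕ, |u (n + 1)| ≤ r * |u n| := by
    intro n
    have hrec' := hrec (n + 1) (Nat.le_add_left 1 n)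
    simp only [Nat.add_sub_cancel] at hrec'
    have hxn := hxψ n
    have hxn1 := hxψ (n + 1)
    have hkey : m₁ * u (n + 1) + ψ (n + 1) (u (n + 1)) = m₂ * u n + ψ n (u n) := by
      rw [hxn1, hxn] at hrec'; linarith
    have h1 : (m₁ - Λ) * |u (n + 1)| ≤ (m₂ + Λ) * |u n| := by
      have hL : m₁ * |u (n + 1)| - Λ * |u (n + 1)| ≤
          |m₁ * u (n + 1) + ψ (n + 1) (u (n + 1))| := by
        have h2 : |m₁ * u (n + 1)| ≤ |m₁ * u (n + 1) + ψ (n + 1) (u (n + 1))| +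
            |ψ (n + 1) (u (n + 1))| := by
          calc |m₁ * u (n + 1)| = |m₁ * u (n + 1) + ψ (n + 1) (u (n + 1)) -
              ψ (n + 1) (u (n + 1))| := by ring_nf
            _ ≤ _ := abs_sub _ _
        have h3 := hψb (n + 1) (u (n + 1))
        have h4 : |m₁ * u (n + 1)| = m₁ * |u (n + 1)| := by
          rw [abs_mul, abs_of_pos (by linarith : (0:ℝ) < m₁)]
        linarith
      have hR : |m₂ * u n + ψ n (u n)| ≤ (m₂ + Λ) * |u n| := by
        calc |m₂ * u n + ψ n (u n)| ≤ |m₂ * u n| + |ψ n (u n)| := abs_add_le _ _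
          _ ≤ m₂ * |u n| + Λ * |u n| := by
              rw [abs_mul, abs_of_nonneg hm₂]; linarith [hψb n (u n)]
          _ = (m₂ + Λ) * |u n| := by ring
      rw [hkey] at hL
      nlinarith
    calc |u (n + 1)| = ((m₁ - Λ) * |u (n + 1)|) / (m₁ - Λ) := by
          field_simp
      _ ≤ ((m₂ + Λ) * |u n|) / (m₁ - Λ) := by
          gcongr
      _ = r * |u n| := by rw [hr]; ring
  have hbound : ∀ n : ℕ, |u n| ≤ r ^ n * |u 0| := by
    intro n
    induction n with
    | zero => simp
    | succ k ih =>
      calc |u (k + 1)| ≤ r * |u k| := hstep k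
        _ ≤ r * (r ^ k * |u 0|) := by
            exact mul_le_mul_of_nonneg_left ih hr0
        _ = r ^ (k + 1) * |u 0| := by ring
  have htendu : Filter.Tendsto u Filter.atTop (nhds 0) := by
    have hgeo : Filter.Tendsto (fun n : ℕ => r ^ n * |u 0|) Filter.atTop (nhds 0) := by
      have := tendsto_pow_atTop_nhds_zero_of_lt_one hr0 hr1
      simpa using this.mul_const |u 0|
    refine (tendsto_zero_iff_abs_tendsto_zero u).mpr ?_
    exact squeeze_zero (fun n => abs_nonneg _) hbound hgeo
  have htendx : Filter.Tendsto x Filter.atTop (nhds 0) := by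
    have hxb : ∀ n, |x n| ≤ Λ * |u n| := by
      intro n; rw [hxψ n, abs_neg]; exact hψb n (u n)
    have : Filter.Tendsto (fun n => Λ * |u n|) Filter.atTop (nhds 0) := by
      have h := (tendsto_zero_iff_abs_tendsto_zero u).mp htendu
      simpa [Function.comp] using h.const_mul Λ
    refine (tendsto_zero_iff_abs_tendsto_zero x).mpr ?_
    exact squeeze_zero (fun n => abs_nonneg _) hxb this
  exact ⟨hbound, hr1, htendu, htendx⟩
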